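/- Let a, b ≥ 1, S_1 ⊆ {1,…,a−1} and S_2 ⊆ {1,…,b−1}. Then in ℚ[S_{a+b}]: D_{=S_1}^{(a)} ⋆ D_{=S_2}^{(b)} = D_{=S_1 ∪ (S_2+a)}^{(a+b)} + D_{=S_1 ∪ \{a\} ∪ (S_2+a)}^{(a+b)}, where ⋆ is the convolution product and S_2 + a := {s + a : s ∈ S_2}. -/

import Mathlib

open Classical in
/-- The descent set of a permutation `σ ∈ S_n` (1-based convention):
`Desc(σ) = {i ∈ {1,…,n−1} : σ(i) > σ(i+1)}`. -/
noncomputable def descSet {n : ℕ} (σ : Equiv.Perm (Fin n)) : Finset ℕ :=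
  (Finset.Ioo 0 n).filter
    (fun i => ∃ h : i < n, σ ⟨i, h⟩ < σ ⟨i - 1, lt_of_le_of_lt (Nat.sub_le i 1) h⟩)

/-- The Solomon element `D_S^{(n)} = Σ_{σ ∈ S_n, Desc(σ) ⊆ S} σ` of `ℚ[S_n]`. -/
noncomputable def Dle (n : ℕ) (S : Finset ℕ) : MonoidAlgebra ℚ (Equiv.Perm (Fin n)) :=
  ∑ σ ∈ Finset.univ.filter (fun σ : Equiv.Perm (Fin n) => descSet σ ⊆ S),
    MonoidAlgebra.single σ (1 : ℚ)

/-- The Solomon element `D_{=S}^{(n)} = Σ_{σ ∈ S_n, Desc(σ) = S} σ` of `ℚ[S_n]`. -/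
noncomputable def Deq (n : ℕ) (S : Finset ℕ) : MonoidAlgebra ℚ (Equiv.Perm (Fin n)) :=
  ∑ σ ∈ Finset.univ.filter (fun σ : Equiv.Perm (Fin n) => descSet σ = S),
    MonoidAlgebra.single σ (1 : ℚ)

/-- `σ×τ ∈ S_{a+b}`: acts as `σ` on `{1,…,a}` and as `a+τ(·−a)` on `{a+1,…,a+b}`. -/
def mulPerm {a b : ℕ} (σ : Equiv.Perm (Fin a)) (τ : Equiv.Perm (Fin b)) :
    Equiv.Perm (Fin (a + b)) :=
  (finSumFinEquiv (m := a) (n := b)).permCongr (Equiv.Perm.sumCongr σ τ)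

/-- `ζ ∈ Sh(a,b)`: `ζ(1) < ⋯ < ζ(a)` and `ζ(a+1) < ⋯ < ζ(a+b)`. -/
def IsShuffle (a b : ℕ) (ζ : Equiv.Perm (Fin (a + b))) : Prop :=
  (∀ i j : Fin (a + b), i < j → (j : ℕ) < a → ζ i < ζ j) ∧
  (∀ i j : Fin (a + b), i < j → a ≤ (i : ℕ) → ζ i < ζ j)

open Classical in
/-- The convolution product `⋆ : ℚ[S_a] × ℚ[S_b] → ℚ[S_{a+b}]`, the bilinear map
determined by `σ ⋆ τ = Σ_{ζ ∈ Sh(a,b)} ζ∘(σ×τ)`. -/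
noncomputable def conv {a b : ℕ} (u : MonoidAlgebra ℚ (Equiv.Perm (Fin a)))
    (v : MonoidAlgebra ℚ (Equiv.Perm (Fin b))) :
    MonoidAlgebra ℚ (Equiv.Perm (Fin (a + b))) :=
  ∑ σ ∈ u.coeff.support, ∑ τ ∈ v.coeff.support,
    (u.coeff σ * v.coeff τ) •
      ∑ ζ ∈ Finset.univ.filter (fun ζ => IsShuffle a b ζ),
        MonoidAlgebra.single (ζ * mulPerm σ τ) (1 : ℚ)

/-- The canonical identification `ℚ[S_m] → ℚ[S_n]` for `m = n`. -/
noncomputable def acast {m n : ℕ} (h : m = n)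
    (u : MonoidAlgebra ℚ (Equiv.Perm (Fin m))) :
    MonoidAlgebra ℚ (Equiv.Perm (Fin n)) :=
  MonoidAlgebra.ofCoeff (Finsupp.mapDomain (fun σ => (finCongr h).permCongr σ) u.coeff)

/-- The Dynkin element `𝒟_m = Σ_{j=0}^{m−1} (−1)^j D_{={1,…,j}}^{(m)}` of `ℚ[S_m]`. -/
noncomputable def DynE (m : ℕ) : MonoidAlgebra ℚ (Equiv.Perm (Fin m)) :=
  ∑ j ∈ Finset.range m, (-1 : ℚ) ^ j • Deq m (Finset.Icc 1 j)

-- ===== auxiliary lemmas =====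
section Aux

lemma mem_descSet {n : ℕ} (σ : Equiv.Perm (Fin n)) (i : ℕ) :
    i ∈ descSet σ ↔ 0 < i ∧ ∃ h : i < n,
      σ ⟨i, h⟩ < σ ⟨i - 1, lt_of_le_of_lt (Nat.sub_le i 1) h⟩ := by
  classical
  simp only [descSet, Finset.mem_filter, Finset.mem_Ioo]
  constructor
  · rintro ⟨⟨h0, _⟩, h⟩; exact ⟨h0, h⟩
  · rintro ⟨h0, h, hlt⟩; exact ⟨⟨h0, h⟩, h, hlt⟩

lemma descSet_subset {n : ℕ} (σ : Equiv.Perm (Fin n)) : descSet σ ⊆ Finset.Ioo 0 n :=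
  Finset.filter_subset _ _

variable {a b : ℕ}

lemma mulPerm_castAdd (σ : Equiv.Perm (Fin a)) (τ : Equiv.Perm (Fin b)) (i : Fin a) :
    mulPerm σ τ (Fin.castAdd b i) = Fin.castAdd b (σ i) := by
  simp [mulPerm, Equiv.permCongr_apply]

lemma mulPerm_natAdd (σ : Equiv.Perm (Fin a)) (τ : Equiv.Perm (Fin b)) (j : Fin b) :
    mulPerm σ τ (Fin.natAdd a j) = Fin.natAdd a (τ j) := by
  simp [mulPerm, Equiv.permCongr_apply]

/-- the first-block map of a shuffle is strictly monotone -/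
lemma shuffle_strictMono_left {ζ : Equiv.Perm (Fin (a + b))} (hζ : IsShuffle a b ζ) :
    StrictMono (fun i : Fin a => ζ (Fin.castAdd b i)) := by
  intro i j hij
  refine hζ.1 _ _ ?_ (by simpa using j.2)
  rw [Fin.lt_def] at hij ⊢
  simpa using hij

lemma shuffle_strictMono_right {ζ : Equiv.Perm (Fin (a + b))} (hζ : IsShuffle a b ζ) :
    StrictMono (fun j : Fin b => ζ (Fin.natAdd a j)) := by
  intro i j hij
  refine hζ.2 _ _ ?_ (by simp)
  rw [Fin.lt_def] at hij ⊢
  simpa using hij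

lemma comp_apply_lt {ζ : Equiv.Perm (Fin (a + b))}
    (σ : Equiv.Perm (Fin a)) (τ : Equiv.Perm (Fin b)) (k : ℕ) (hk : k < a) (hk2 : k < a + b) :
    (ζ * mulPerm σ τ) ⟨k, hk2⟩ = ζ (Fin.castAdd b (σ ⟨k, hk⟩)) := by
  have e : (⟨k, hk2⟩ : Fin (a + b)) = Fin.castAdd b ⟨k, hk⟩ := by
    apply Fin.ext; simp
  rw [Equiv.Perm.mul_apply, e, mulPerm_castAdd]

lemma comp_apply_ge {ζ : Equiv.Perm (Fin (a + b))}
    (σ : Equiv.Perm (Fin a)) (τ : Equiv.Perm (Fin b)) (k : ℕ) (hk : a ≤ k) (hk2 : k < a + b) :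
    (ζ * mulPerm σ τ) ⟨k, hk2⟩ = ζ (Fin.natAdd a (τ ⟨k - a, by omega⟩)) := by
  have e : (⟨k, hk2⟩ : Fin (a + b)) = Fin.natAdd a ⟨k - a, by omega⟩ := by
    apply Fin.ext; simp; omega
  rw [Equiv.Perm.mul_apply, e, mulPerm_natAdd]

/-- descents of `ζ∘(σ×τ)` away from `a` -/
lemma descSet_comp {ζ : Equiv.Perm (Fin (a + b))} (hζ : IsShuffle a b ζ)
    (σ : Equiv.Perm (Fin a)) (τ : Equiv.Perm (Fin b)) :
    descSet (ζ * mulPerm σ τ) \ {a} = descSet σ ∪ (descSet τ).image (· + a) := by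
  classical
  ext i
  simp only [Finset.mem_sdiff, Finset.mem_singleton, Finset.mem_union, Finset.mem_image]
  by_cases hia : i = a
  · subst hia
    constructor
    · rintro ⟨_, h⟩; exact absurd rfl h
    · rintro (h | ⟨s, hs, hsa⟩)
      · have := descSet_subset σ h; simp only [Finset.mem_Ioo] at this; omega
      · have := descSet_subset τ hs; simp only [Finset.mem_Ioo] at this; omega
  · rw [mem_descSet]
    by_cases hlt : i < a
    · constructor
      · rintro ⟨⟨h0, h, hd⟩, -⟩
        left
        rw [mem_descSet]
        refine ⟨h0, hlt, ?_⟩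
        rw [comp_apply_lt σ τ i hlt h,
          comp_apply_lt σ τ (i - 1) (by omega) (by omega)] at hd
        exact (shuffle_strictMono_left hζ).lt_iff_lt.mp hd
      · rintro (h | ⟨s, hs, hsa⟩)
        · rw [mem_descSet] at h
          obtain ⟨h0, h1, hd⟩ := h
          refine ⟨⟨h0, by omega, ?_⟩, hia⟩
          rw [comp_apply_lt σ τ i hlt (by omega),
            comp_apply_lt σ τ (i - 1) (by omega) (by omega)]
          exact shuffle_strictMono_left hζ hd
        · have := descSet_subset τ hs; simp only [Finset.mem_Ioo] at this; omega
    · -- a < i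
      have hai : a < i := by omega
      constructor
      · rintro ⟨⟨h0, h, hd⟩, -⟩
        right
        refine ⟨i - a, ?_, by omega⟩
        rw [mem_descSet]
        refine ⟨by omega, by omega, ?_⟩
        rw [comp_apply_ge σ τ i (by omega) h,
          comp_apply_ge σ τ (i - 1) (by omega) (by omega)] at hd
        have hd' := (shuffle_strictMono_right hζ).lt_iff_lt.mp hd
        have e : (⟨i - a - 1, by omega⟩ : Fin b) = ⟨i - 1 - a, by omega⟩ := by
          apply Fin.ext; simp; omega
        rw [e]
        exact hd'
      · rintro (h | ⟨s, hs, hsa⟩)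
        · have := descSet_subset σ h; simp only [Finset.mem_Ioo] at this; omega
        · have hsb := descSet_subset τ hs
          simp only [Finset.mem_Ioo] at hsb
          rw [mem_descSet] at hs
          obtain ⟨h0, h1, hd⟩ := hs
          refine ⟨⟨by omega, by omega, ?_⟩, hia⟩
          rw [comp_apply_ge σ τ i (by omega) (by omega),
            comp_apply_ge σ τ (i - 1) (by omega) (by omega)]
          apply shuffle_strictMono_right hζ
          have e1 : (⟨i - a, by omega⟩ : Fin b) = ⟨s, h1⟩ := by
            apply Fin.ext; simp; omega
          have e2 : (⟨i - 1 - a, by omega⟩ : Fin b) = ⟨s - 1, by omega⟩ := by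
            apply Fin.ext; simp; omega
          rw [e1, e2]
          exact hd

/-- uniqueness of the decomposition -/
lemma shuffle_decomp_inj {ζ ζ' : Equiv.Perm (Fin (a + b))}
    (hζ : IsShuffle a b ζ) (hζ' : IsShuffle a b ζ')
    {σ σ' : Equiv.Perm (Fin a)} {τ τ' : Equiv.Perm (Fin b)}
    (h : ζ * mulPerm σ τ = ζ' * mulPerm σ' τ') : ζ = ζ' ∧ σ = σ' ∧ τ = τ' := by
  have keyL : ∀ i : Fin a, ζ (Fin.castAdd b (σ i)) = ζ' (Fin.castAdd b (σ' i)) := by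
    intro i
    have := congrArg (fun p : Equiv.Perm (Fin (a + b)) => p (Fin.castAdd b i)) h
    simpa [Equiv.Perm.mul_apply, mulPerm_castAdd] using this
  have keyR : ∀ j : Fin b, ζ (Fin.natAdd a (τ j)) = ζ' (Fin.natAdd a (τ' j)) := by
    intro j
    have := congrArg (fun p : Equiv.Perm (Fin (a + b)) => p (Fin.natAdd a j)) h
    simpa [Equiv.Perm.mul_apply, mulPerm_natAdd] using this
  have hrangeF : Set.range (fun i : Fin a => ζ (Fin.castAdd b i))
      = Set.range (fun i : Fin a => ζ' (Fin.castAdd b i)) := by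
    ext x
    simp only [Set.mem_range]
    constructor
    · rintro ⟨i, rfl⟩
      exact ⟨σ' (σ.symm i), by rw [← keyL (σ.symm i)]; simp⟩
    · rintro ⟨i, rfl⟩
      exact ⟨σ (σ'.symm i), by rw [keyL (σ'.symm i)]; simp⟩
  have hrangeG : Set.range (fun j : Fin b => ζ (Fin.natAdd a j))
      = Set.range (fun j : Fin b => ζ' (Fin.natAdd a j)) := by
    ext x
    simp only [Set.mem_range]
    constructor
    · rintro ⟨j, rfl⟩
      exact ⟨τ' (τ.symm j), by rw [← keyR (τ.symm j)]; simp⟩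
    · rintro ⟨j, rfl⟩
      exact ⟨τ (τ'.symm j), by rw [keyR (τ'.symm j)]; simp⟩
  haveI : WellFoundedLT (Fin a) := inferInstance
  haveI : WellFoundedLT (Fin b) := inferInstance
  have hFeq := (StrictMono.range_inj (shuffle_strictMono_left hζ)
    (shuffle_strictMono_left hζ')).mp hrangeF
  have hGeq := (StrictMono.range_inj (shuffle_strictMono_right hζ)
    (shuffle_strictMono_right hζ')).mp hrangeG
  have hζeq : ζ = ζ' := by
    apply Equiv.ext
    intro x
    have hx2 : (x : ℕ) < a + b := x.2
    by_cases hx : (x : ℕ) < a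
    · have e : x = Fin.castAdd b ⟨x, hx⟩ := by apply Fin.ext; simp
      rw [e]
      exact congrFun hFeq ⟨x, hx⟩
    · have e : x = Fin.natAdd a ⟨(x : ℕ) - a, by omega⟩ := by
        apply Fin.ext; simp; omega
      rw [e]
      exact congrFun hGeq _
  subst hζeq
  have hμ : mulPerm σ τ = mulPerm σ' τ' := mul_left_cancel h
  refine ⟨rfl, ?_, ?_⟩
  · apply Equiv.ext
    intro i
    have := congrArg (fun p : Equiv.Perm (Fin (a + b)) => p (Fin.castAdd b i)) hμ
    simp only [mulPerm_castAdd] at this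
    apply Fin.ext
    have := congrArg Fin.val this
    simpa using this
  · apply Equiv.ext
    intro j
    have := congrArg (fun p : Equiv.Perm (Fin (a + b)) => p (Fin.natAdd a j)) hμ
    simp only [mulPerm_natAdd] at this
    apply Fin.ext
    have := congrArg Fin.val this
    simpa using this

open Classical in
noncomputable def buildShuffle (A : Finset (Fin (a + b))) (hA : A.card = a)
    (hAc : Aᶜ.card = b) : Equiv.Perm (Fin (a + b)) :=
  finSumFinEquiv.symm.trans ((Equiv.sumCongr (A.orderIsoOfFin hA).toEquiv
    ((Aᶜ.orderIsoOfFin hAc).toEquiv.trans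
      (Equiv.subtypeEquivRight (fun x => Finset.mem_compl)))).trans
    (Equiv.sumCompl (· ∈ A)))

lemma buildShuffle_castAdd (A : Finset (Fin (a + b))) (hA : A.card = a)
    (hAc : Aᶜ.card = b) (i : Fin a) :
    buildShuffle A hA hAc (Fin.castAdd b i) = (A.orderIsoOfFin hA i : Fin (a + b)) := by
  simp [buildShuffle, Equiv.trans_apply, finSumFinEquiv_symm_apply_castAdd]

lemma buildShuffle_natAdd (A : Finset (Fin (a + b))) (hA : A.card = a)
    (hAc : Aᶜ.card = b) (j : Fin b) :
    buildShuffle A hA hAc (Fin.natAdd a j) = (Aᶜ.orderIsoOfFin hAc j : Fin (a + b)) := by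
  simp [buildShuffle, Equiv.trans_apply, finSumFinEquiv_symm_apply_natAdd]

set_option maxHeartbeats 1000000 in
lemma buildShuffle_isShuffle (A : Finset (Fin (a + b))) (hA : A.card = a)
    (hAc : Aᶜ.card = b) : IsShuffle a b (buildShuffle A hA hAc) := by
  constructor
  · intro i j hij hj
    have hi : (i : ℕ) < a := lt_trans hij hj
    have ei : i = Fin.castAdd b ⟨i, hi⟩ := Fin.ext (by simp)
    have ej : j = Fin.castAdd b ⟨j, hj⟩ := Fin.ext (by simp)
    rw [ei, ej, buildShuffle_castAdd, buildShuffle_castAdd]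
    exact Subtype.coe_lt_coe.mpr ((A.orderIsoOfFin hA).strictMono (Fin.mk_lt_mk.mpr hij))
  · intro i j hij hi
    have hj2 : (j : ℕ) < a + b := j.2
    have hj : a ≤ (j : ℕ) := le_of_lt (lt_of_le_of_lt hi hij)
    have ei : i = Fin.natAdd a ⟨(i : ℕ) - a, by omega⟩ := Fin.ext (by simp; omega)
    have ej : j = Fin.natAdd a ⟨(j : ℕ) - a, by omega⟩ := Fin.ext (by simp; omega)
    conv_lhs => rw [ei, buildShuffle_natAdd]
    conv_rhs => rw [ej, buildShuffle_natAdd]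
    refine Subtype.coe_lt_coe.mpr ((Aᶜ.orderIsoOfFin hAc).strictMono ?_)
    rw [Fin.lt_def] at hij
    exact Fin.mk_lt_mk.mpr (by omega)

/-- existence of the decomposition -/
lemma shuffle_decomp (ha : 1 ≤ a) (hb : 1 ≤ b) (π : Equiv.Perm (Fin (a + b))) :
    ∃ ζ σ τ, IsShuffle a b ζ ∧ π = ζ * mulPerm σ τ := by
  classical
  have hinj : Function.Injective (fun i : Fin a => π (Fin.castAdd b i)) :=
    fun i j hij => Fin.castAdd_injective a b (π.injective hij)
  set A : Finset (Fin (a + b)) :=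
    Finset.univ.image (fun i : Fin a => π (Fin.castAdd b i)) with hAdef
  have hA : A.card = a := by
    rw [hAdef, Finset.card_image_of_injective _ hinj, Finset.card_univ, Fintype.card_fin]
  have hAc : Aᶜ.card = b := by
    rw [Finset.card_compl, hA]
    simp
  set ζ : Equiv.Perm (Fin (a + b)) := buildShuffle A hA hAc with hζdef
  have hζl : ∀ i : Fin a, ζ (Fin.castAdd b i) = (A.orderIsoOfFin hA i : Fin (a + b)) :=
    buildShuffle_castAdd A hA hAc
  have hζ : IsShuffle a b ζ := buildShuffle_isShuffle A hA hAc
  set μ : Equiv.Perm (Fin (a + b)) := ζ⁻¹ * π with hμdef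
  have hμ1 : ∀ i : Fin a, ((μ (Fin.castAdd b i)) : ℕ) < a := by
    intro i
    have hmem : π (Fin.castAdd b i) ∈ A := by
      rw [hAdef]; exact Finset.mem_image_of_mem _ (Finset.mem_univ i)
    have h1 : ζ (Fin.castAdd b ((A.orderIsoOfFin hA).symm ⟨π (Fin.castAdd b i), hmem⟩))
        = π (Fin.castAdd b i) := by
      rw [hζl]; simp
    have h2 : μ (Fin.castAdd b i)
        = Fin.castAdd b ((A.orderIsoOfFin hA).symm ⟨π (Fin.castAdd b i), hmem⟩) := by
      rw [hμdef, Equiv.Perm.mul_apply]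
      apply ζ.injective
      rw [show ∀ y, ζ (ζ⁻¹ y) = y from fun y => ζ.apply_symm_apply y, h1]
    rw [h2]
    simp
  have hcastinj : Function.Injective (fun i : Fin a => μ (Fin.castAdd b i)) :=
    fun i j hij => Fin.castAdd_injective a b (μ.injective hij)
  have hμ2 : ∀ x : Fin (a + b), a ≤ (x : ℕ) → a ≤ ((μ x) : ℕ) := by
    intro x hx
    by_contra hc
    push_neg at hc
    set Block : Finset (Fin (a + b)) :=
      Finset.univ.filter (fun y : Fin (a + b) => (y : ℕ) < a) with hBdef
    have hBeq : Block = Finset.univ.image (fun i : Fin a => Fin.castAdd b i) := by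
      ext y
      simp only [hBdef, Finset.mem_filter, Finset.mem_univ, true_and, Finset.mem_image]
      constructor
      · intro hy
        exact ⟨⟨y, hy⟩, Fin.ext (by simp)⟩
      · rintro ⟨i, rfl⟩
        simpa using i.2
    have hBcard : Block.card = a := by
      rw [hBeq, Finset.card_image_of_injective _ (Fin.castAdd_injective a b),
        Finset.card_univ, Fintype.card_fin]
    have hsub : Finset.univ.image (fun i : Fin a => μ (Fin.castAdd b i)) ⊆ Block := by
      intro y hy
      rw [Finset.mem_image] at hy
      obtain ⟨i, -, rfl⟩ := hy
      rw [hBdef]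
      simp only [Finset.mem_filter, Finset.mem_univ, true_and]
      exact hμ1 i
    have heq : Finset.univ.image (fun i : Fin a => μ (Fin.castAdd b i)) = Block := by
      apply Finset.eq_of_subset_of_card_le hsub
      rw [hBcard, Finset.card_image_of_injective _ hcastinj, Finset.card_univ,
        Fintype.card_fin]
    have hmx : μ x ∈ Block := by
      rw [hBdef]; simp only [Finset.mem_filter, Finset.mem_univ, true_and]; exact hc
    rw [← heq, Finset.mem_image] at hmx
    obtain ⟨i, -, hi⟩ := hmx
    have := μ.injective hi
    rw [← this] at hx
    simp at hx
    omega
  have hσinj : Function.Injective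
      (fun i : Fin a => (⟨((μ (Fin.castAdd b i)) : ℕ), hμ1 i⟩ : Fin a)) := by
    intro i j hij
    have : ((μ (Fin.castAdd b i)) : ℕ) = ((μ (Fin.castAdd b j)) : ℕ) := by
      simpa using congrArg Fin.val hij
    exact hcastinj (Fin.ext this)
  let σ : Equiv.Perm (Fin a) := Equiv.ofBijective _ (Finite.injective_iff_bijective.mp hσinj)
  have hτb : ∀ j : Fin b, ((μ (Fin.natAdd a j)) : ℕ) - a < b := by
    intro j
    have h1 : ((μ (Fin.natAdd a j)) : ℕ) < a + b := (μ (Fin.natAdd a j)).2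
    omega
  have hτinj : Function.Injective
      (fun j : Fin b => (⟨((μ (Fin.natAdd a j)) : ℕ) - a, hτb j⟩ : Fin b)) := by
    intro i j hij
    have h1 : a ≤ ((μ (Fin.natAdd a i)) : ℕ) := hμ2 _ (by simp)
    have h2 : a ≤ ((μ (Fin.natAdd a j)) : ℕ) := hμ2 _ (by simp)
    have h3 : ((μ (Fin.natAdd a i)) : ℕ) - a = ((μ (Fin.natAdd a j)) : ℕ) - a := by
      simpa using congrArg Fin.val hij
    have h4 : μ (Fin.natAdd a i) = μ (Fin.natAdd a j) := Fin.ext (by omega)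
    have h5 := μ.injective h4
    have := congrArg Fin.val h5
    simp at this
    exact Fin.ext this
  let τ : Equiv.Perm (Fin b) := Equiv.ofBijective _ (Finite.injective_iff_bijective.mp hτinj)
  have hμeq : mulPerm σ τ = μ := by
    apply Equiv.ext
    intro x
    have hx2 : (x : ℕ) < a + b := x.2
    by_cases hx : (x : ℕ) < a
    · have e : x = Fin.castAdd b ⟨x, hx⟩ := Fin.ext (by simp)
      rw [e, mulPerm_castAdd]
      apply Fin.ext
      simp [σ, Equiv.ofBijective_apply]
    · have e : x = Fin.natAdd a ⟨(x : ℕ) - a, by omega⟩ := Fin.ext (by simp; omega)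
      rw [e, mulPerm_natAdd]
      apply Fin.ext
      have hge : a ≤ ((μ (Fin.natAdd a ⟨(x : ℕ) - a, by omega⟩)) : ℕ) :=
        hμ2 _ (by simp)
      simp only [τ, Equiv.ofBijective_apply, Fin.coe_natAdd]
      omega
  refine ⟨ζ, σ, τ, hζ, ?_⟩
  rw [hμeq, hμdef, ← mul_assoc]
  simp

lemma Deq_apply (n : ℕ) (S : Finset ℕ) (π : Equiv.Perm (Fin n)) :
    (Deq n S).coeff π = if descSet π = S then 1 else 0 := by
  classical
  rw [Deq, MonoidAlgebra.coeff_sum, Finsupp.finset_sum_apply]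
  simp only [MonoidAlgebra.coeff_single, Finsupp.single_apply]
  rw [Finset.sum_ite_eq']
  simp [Finset.mem_filter]

lemma Deq_support (n : ℕ) (S : Finset ℕ) :
    (Deq n S).coeff.support = Finset.univ.filter (fun σ => descSet σ = S) := by
  classical
  ext π
  rw [Finsupp.mem_support_iff, Deq_apply]
  by_cases h : descSet π = S <;> simp [h]

lemma union_extract {a : ℕ} {S₁ S₂ D₁ D₂ : Finset ℕ}
    (hS₁ : ∀ i ∈ S₁, i < a) (hD₁ : ∀ i ∈ D₁, i < a)
    (hS₂ : ∀ i ∈ S₂, 0 < i) (hD₂ : ∀ i ∈ D₂, 0 < i)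
    (h : D₁ ∪ D₂.image (· + a) = S₁ ∪ S₂.image (· + a)) : D₁ = S₁ ∧ D₂ = S₂ := by
  classical
  have himg : ∀ (X : Finset ℕ), (∀ i ∈ X, 0 < i) → ∀ i ∈ X.image (· + a), a < i := by
    intro X hX i hi
    obtain ⟨s, hs, rfl⟩ := Finset.mem_image.mp hi
    have := hX s hs
    omega
  have h1 : D₁ = S₁ := by
    ext i
    constructor
    · intro hi
      have hia := hD₁ i hi
      have hmem : i ∈ S₁ ∪ S₂.image (· + a) := h ▸ Finset.mem_union_left _ hi
      rcases Finset.mem_union.mp hmem with h' | h'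
      · exact h'
      · have := himg S₂ hS₂ i h'; omega
    · intro hi
      have hia := hS₁ i hi
      have hmem : i ∈ D₁ ∪ D₂.image (· + a) := h.symm ▸ Finset.mem_union_left _ hi
      rcases Finset.mem_union.mp hmem with h' | h'
      · exact h'
      · have := himg D₂ hD₂ i h'; omega
  refine ⟨h1, ?_⟩
  have h2 : D₂.image (· + a) = S₂.image (· + a) := by
    ext i
    constructor
    · intro hi
      have hia := himg D₂ hD₂ i hi
      have hmem : i ∈ S₁ ∪ S₂.image (· + a) := h ▸ Finset.mem_union_right _ hi
      rcases Finset.mem_union.mp hmem with h' | h'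
      · have := hS₁ i h'; omega
      · exact h'
    · intro hi
      have hia := himg S₂ hS₂ i hi
      have hmem : i ∈ D₁ ∪ D₂.image (· + a) := h.symm ▸ Finset.mem_union_right _ hi
      rcases Finset.mem_union.mp hmem with h' | h'
      · have := hD₁ i h'; omega
      · exact h'
  exact Finset.image_injective (fun x y hxy => by simpa using hxy) h2

end Aux

/-- `D_{=S₁}^{(a)} ⋆ D_{=S₂}^{(b)}
= D_{=S₁ ∪ (S₂+a)}^{(a+b)} + D_{=S₁ ∪ {a} ∪ (S₂+a)}^{(a+b)}`. -/
theorem conv_Deq_Deq (a b : ℕ) (ha : 1 ≤ a) (hb : 1 ≤ b)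
    (S₁ S₂ : Finset ℕ) (hS₁ : S₁ ⊆ Finset.Icc 1 (a - 1)) (hS₂ : S₂ ⊆ Finset.Icc 1 (b - 1)) :
    conv (Deq a S₁) (Deq b S₂) =
      Deq (a + b) (S₁ ∪ S₂.image (· + a)) +
        Deq (a + b) (S₁ ∪ {a} ∪ S₂.image (· + a)) := by
  classical
  have hS₁a : ∀ i ∈ S₁, i < a := by
    intro i hi; have := hS₁ hi; simp only [Finset.mem_Icc] at this; omega
  have hS₂b : ∀ i ∈ S₂, 0 < i := by
    intro i hi; have := hS₂ hi; simp only [Finset.mem_Icc] at this; omega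
  set T₁ : Finset ℕ := S₁ ∪ S₂.image (· + a) with hT₁def
  set T₂ : Finset ℕ := S₁ ∪ {a} ∪ S₂.image (· + a) with hT₂def
  have haT₁ : a ∉ T₁ := by
    rw [hT₁def]
    simp only [Finset.mem_union, Finset.mem_image, not_or]
    constructor
    · intro h; have := hS₁a a h; omega
    · rintro ⟨s, hs, hsa⟩
      have := hS₂b s hs; omega
  have hT₂eq : T₂ = insert a T₁ := by
    rw [hT₁def, hT₂def]
    ext i
    simp only [Finset.mem_union, Finset.mem_insert, Finset.mem_singleton]
    tauto
  have hT₁T₂ : T₁ ≠ T₂ := by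
    intro h
    rw [hT₂eq] at h
    exact haT₁ (h ▸ Finset.mem_insert_self a T₁)
  -- abbreviations
  set F₁ := Finset.univ.filter (fun σ : Equiv.Perm (Fin a) => descSet σ = S₁) with hF₁def
  set F₂ := Finset.univ.filter (fun τ : Equiv.Perm (Fin b) => descSet τ = S₂) with hF₂def
  set Sh := Finset.univ.filter (fun ζ : Equiv.Perm (Fin (a + b)) => IsShuffle a b ζ)
    with hShdef
  -- LHS
  rw [conv, Deq_support, Deq_support]
  have hLHS : (∑ σ ∈ F₁, ∑ τ ∈ F₂, ((Deq a S₁).coeff σ * (Deq b S₂).coeff τ) •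
        ∑ ζ ∈ Sh, MonoidAlgebra.single (ζ * mulPerm σ τ) (1 : ℚ))
      = ∑ p ∈ F₁ ×ˢ F₂ ×ˢ Sh,
          MonoidAlgebra.single (p.2.2 * mulPerm p.1 p.2.1) (1 : ℚ) := by
    rw [Finset.sum_product]
    apply Finset.sum_congr rfl
    intro σ hσ
    rw [Finset.sum_product]
    apply Finset.sum_congr rfl
    intro τ hτ
    rw [hF₁def] at hσ; rw [hF₂def] at hτ
    rw [Deq_apply, Deq_apply, if_pos (Finset.mem_filter.mp hσ).2,
      if_pos (Finset.mem_filter.mp hτ).2, one_mul, one_smul]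
  rw [hLHS, Deq, Deq]
  have hdisj : Disjoint
      (Finset.univ.filter (fun π : Equiv.Perm (Fin (a + b)) => descSet π = T₁))
      (Finset.univ.filter (fun π : Equiv.Perm (Fin (a + b)) => descSet π = T₂)) := by
    rw [Finset.disjoint_filter]
    intro π _ h1 h2
    exact hT₁T₂ (h1 ▸ h2)
  rw [← Finset.sum_union hdisj]
  -- the bijection
  refine Finset.sum_bij (fun p _ => p.2.2 * mulPerm p.1 p.2.1) ?_ ?_ ?_ ?_
  · rintro ⟨σ, τ, ζ⟩ hp
    rw [Finset.mem_product] at hp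
    obtain ⟨hσ, hp2⟩ := hp
    rw [Finset.mem_product] at hp2
    obtain ⟨hτ, hζ⟩ := hp2
    rw [hF₁def, Finset.mem_filter] at hσ
    rw [hF₂def, Finset.mem_filter] at hτ
    rw [hShdef, Finset.mem_filter] at hζ
    have hkey := descSet_comp hζ.2 σ τ
    rw [hσ.2, hτ.2] at hkey
    rw [Finset.mem_union, Finset.mem_filter, Finset.mem_filter]
    by_cases hmem : a ∈ descSet (ζ * mulPerm σ τ)
    · right
      refine ⟨Finset.mem_univ _, ?_⟩
      have : descSet (ζ * mulPerm σ τ)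
          = insert a (descSet (ζ * mulPerm σ τ) \ {a}) := by
        rw [← Finset.erase_eq, Finset.insert_erase hmem]
      rw [this, hkey, ← hT₁def, ← hT₂eq]
    · left
      refine ⟨Finset.mem_univ _, ?_⟩
      have : descSet (ζ * mulPerm σ τ)
          = descSet (ζ * mulPerm σ τ) \ {a} := by
        rw [← Finset.erase_eq, Finset.erase_eq_of_notMem hmem]
      rw [this, hkey, ← hT₁def]
  · rintro ⟨σ₁, τ₁, ζ₁⟩ hp₁ ⟨σ₂, τ₂, ζ₂⟩ hp₂ heq
    rw [Finset.mem_product] at hp₁ hp₂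
    rw [Finset.mem_product] at hp₁ hp₂
    obtain ⟨-, -, hζ₁⟩ := hp₁
    obtain ⟨-, -, hζ₂⟩ := hp₂
    rw [hShdef, Finset.mem_filter] at hζ₁ hζ₂
    obtain ⟨hζeq, hσeq, hτeq⟩ := shuffle_decomp_inj hζ₁.2 hζ₂.2 heq
    simp only [Prod.mk.injEq]
    exact ⟨hσeq, hτeq, hζeq⟩
  · intro π hπ
    obtain ⟨ζ, σ, τ, hζ, hπeq⟩ := shuffle_decomp ha hb π
    rw [Finset.mem_union, Finset.mem_filter, Finset.mem_filter] at hπ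
    have hkey : descSet π \ {a} = T₁ := by
      rcases hπ with ⟨-, hd⟩ | ⟨-, hd⟩
      · rw [hd, ← Finset.erase_eq, Finset.erase_eq_of_notMem haT₁]
      · rw [hd, hT₂eq, ← Finset.erase_eq, Finset.erase_insert haT₁]
    have hkey2 := descSet_comp hζ σ τ
    rw [← hπeq, hkey, hT₁def] at hkey2
    have hτb : ∀ i ∈ descSet τ, 0 < i := by
      intro i hi
      have := descSet_subset τ hi
      simp only [Finset.mem_Ioo] at this
      omega
    have hσa : ∀ i ∈ descSet σ, i < a := by
      intro i hi
      have := descSet_subset σ hi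
      simp only [Finset.mem_Ioo] at this
      omega
    obtain ⟨hσS, hτS⟩ := union_extract hS₁a hσa hS₂b hτb hkey2.symm
    refine ⟨⟨σ, τ, ζ⟩, ?_, hπeq.symm⟩
    rw [Finset.mem_product]
    refine ⟨?_, ?_⟩
    · rw [hF₁def, Finset.mem_filter]; exact ⟨Finset.mem_univ _, hσS⟩
    rw [Finset.mem_product]
    refine ⟨?_, ?_⟩
    · rw [hF₂def, Finset.mem_filter]; exact ⟨Finset.mem_univ _, hτS⟩
    · rw [hShdef, Finset.mem_filter]; exact ⟨Finset.mem_univ _, hζ⟩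
  · intro p hp
    rfl
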